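/- Let 𝐊 be an Effros-measurable map from Ω to closed convex cones in ℝ^d containing ℝ₋^d, possessing a p-integrable selection, and let X ∈ L^p(Ω; ℝ^d) be such that 𝐫(X) = (r₁(X₁),…,r_d(X_d)) is finite. Then 𝐫(X) + ρ_{s,0}(𝐊) ⊆ ρ_{s,0}(X + 𝐊), where X + 𝐊 is the set-valued portfolio ω ↦ X(ω) + 𝐊(ω); that is, for every x ∈ ρ_{s,0}(𝐊), the point 𝐫(X) + x belongs to ρ_{s,0}(X + 𝐊). -/

import Mathlib

open MeasureTheory Set Filter
open scoped Pointwise ENNReal RealInnerProductSpace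

noncomputable section

/-- `ℝ^d` with the Euclidean norm. -/
abbrev Vec (d : ℕ) := EuclideanSpace ℝ (Fin d)

/-- Effros measurability of a set-valued map: `{ω : X(ω) ∩ G ≠ ∅}` is measurable
for every open `G`. -/
def EffrosMeasurable {Ω : Type*} [MeasurableSpace Ω] {d : ℕ} (X : Ω → Set (Vec d)) : Prop :=
  ∀ G : Set (Vec d), IsOpen G → MeasurableSet {ω | (X ω ∩ G).Nonempty}

/-- A set-valued portfolio: an Effros-measurable map with nonempty closed convex
lower-set values. -/
structure IsPortfolio {Ω : Type*} [MeasurableSpace Ω] {d : ℕ} (X : Ω → Set (Vec d)) : Prop where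
  effros : EffrosMeasurable X
  nonempty : ∀ ω, (X ω).Nonempty
  isClosed : ∀ ω, IsClosed (X ω)
  convex : ∀ ω, Convex ℝ (X ω)
  lower : ∀ ω, ∀ x ∈ X ω, ∀ y : Vec d, (∀ i, y i ≤ x i) → y ∈ X ω

/-- A coherent risk measure on `L^p(Ω; ℝ)` with values in `ℝ ∪ {+∞} ⊆ EReal`:
monotone (antitone in the gain), cash invariant, subadditive and positively homogeneous. -/
structure IsCoherent {Ω : Type*} [MeasurableSpace Ω] (μ : Measure Ω) (p : ℝ≥0∞)
    (r : (Ω → ℝ) → EReal) : Prop where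
  ne_bot : ∀ ξ : Ω → ℝ, MemLp ξ p μ → r ξ ≠ ⊥
  mono : ∀ ξ η : Ω → ℝ, MemLp ξ p μ → MemLp η p μ → (∀ᵐ ω ∂μ, ξ ω ≤ η ω) → r η ≤ r ξ
  cash : ∀ ξ : Ω → ℝ, MemLp ξ p μ → ∀ c : ℝ, r (fun ω => ξ ω + c) = r ξ - (c : EReal)
  subadd : ∀ ξ η : Ω → ℝ, MemLp ξ p μ → MemLp η p μ →
    r (fun ω => ξ ω + η ω) ≤ r ξ + r η
  homog : ∀ ξ : Ω → ℝ, MemLp ξ p μ → ∀ c : ℝ, 0 < c →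
    r (fun ω => c * ξ ω) = (c : EReal) * r ξ

/-- The selection risk measure `ρ_{s,0}(𝐗)`: the set of deterministic `x ∈ ℝ^d`
for which `𝐗 + x` has a selection with all individually acceptable components. -/
def rho0 {Ω : Type*} [MeasurableSpace Ω] (μ : Measure Ω) (p : ℝ≥0∞) {d : ℕ}
    (r : Fin d → (Ω → ℝ) → EReal) (X : Ω → Set (Vec d)) : Set (Vec d) :=
  {x | ∃ ξ : Ω → Vec d, MemLp ξ p μ ∧ (∀ᵐ ω ∂μ, ξ ω ∈ X ω) ∧
        ∀ i, r i (fun ω => ξ ω i + x i) ≤ 0}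

/-- Inclusion (5.1), lower bound: `𝐫(X) + ρ_{s,0}(K) ⊆ ρ_{s,0}(X + K)` for a random
exchange cone `K` and a `p`-integrable gain `X` with finite marginal risks. -/
theorem statement17 {Ω : Type*} [MeasurableSpace Ω] (μ : Measure Ω) [IsProbabilityMeasure μ]
    [μ.IsComplete] {d : ℕ} (p : ℝ≥0∞) (hp : 1 ≤ p)
    (r : Fin d → (Ω → ℝ) → EReal) (hr : ∀ i, IsCoherent μ p (r i))
    (K : Ω → Set (Vec d)) (hKm : EffrosMeasurable K)
    (hKcl : ∀ ω, IsClosed (K ω)) (hKconv : ∀ ω, Convex ℝ (K ω))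
    (hKcone : ∀ ω, ∀ c : ℝ, 0 < c → ∀ y ∈ K ω, c • y ∈ K ω)
    (hKneg : ∀ ω, {y : Vec d | ∀ i, y i ≤ 0} ⊆ K ω)
    (hKsel : ∃ η : Ω → Vec d, MemLp η p μ ∧ ∀ᵐ ω ∂μ, η ω ∈ K ω)
    (X : Ω → Vec d) (hX : MemLp X p μ)
    (hfin : ∀ i, r i (fun ω => X ω i) ≠ ⊤ ∧ r i (fun ω => X ω i) ≠ ⊥) :
    ∀ x ∈ rho0 μ p r K,
      (WithLp.toLp 2 (fun i => (r i (fun ω => X ω i)).toReal + x i) : Vec d) ∈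
        rho0 μ p r (fun ω => (X ω + ·) '' K ω) := by
  rintro x ⟨ξ, hξ, hξK, hξr⟩
  have comp : ∀ (f : Ω → Vec d), MemLp f p μ → ∀ i, MemLp (fun ω => f ω i) p μ := by
    intro f hf i
    exact (EuclideanSpace.proj (𝕜 := ℝ) i).comp_memLp' hf
  refine ⟨fun ω => X ω + ξ ω, hX.add hξ, ?_, ?_⟩
  · filter_upwards [hξK] with ω hω
    exact ⟨ξ ω, hω, rfl⟩
  · intro i
    have hXi := comp X hX i
    have hξi := comp ξ hξ i
    have key : r i (fun ω => (X ω + ξ ω) i) ≤ r i (fun ω => X ω i) + r i (fun ω => ξ ω i) := by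
      have := (hr i).subadd _ _ hXi hξi
      simpa [PiLp.add_apply] using this
    -- r i ξ_i ≤ x i
    have hξx : r i (fun ω => ξ ω i) ≤ (x i : EReal) := by
      have h0 := hξr i
      rw [(hr i).cash _ hξi (x i)] at h0
      have := add_le_add_left h0 ((x i : EReal))
      rwa [EReal.sub_add_cancel, zero_add] at this
    have hc : r i (fun ω => (X ω + ξ ω) i + ((WithLp.toLp 2 (fun j => (r j (fun ω => X ω j)).toReal + x j) : Vec d) i))
        = r i (fun ω => (X ω + ξ ω) i) - (((r i (fun ω => X ω i)).toReal + x i : ℝ) : EReal) := by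
      exact (hr i).cash _ ((comp _ (hX.add hξ)) i) _
    rw [hc]
    set a := r i (fun ω => X ω i) with ha
    have haR : a = ((a.toReal : ℝ) : EReal) := (EReal.coe_toReal (hfin i).1 (hfin i).2).symm
    calc r i (fun ω => (X ω + ξ ω) i) - (((a.toReal + x i : ℝ)) : EReal)
        ≤ (a + r i (fun ω => ξ ω i)) - ((a.toReal + x i : ℝ) : EReal) := by
          exact add_le_add_left key _
      _ ≤ (a + (x i : EReal)) - ((a.toReal + x i : ℝ) : EReal) := by
          exact add_le_add_left (add_le_add_right hξx a) _
      _ = 0 := by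
          rw [haR]
          norm_cast
          simp
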